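/- Let A be an additive weakly exact category with an additive super structure ε, and let (A, d_A) and (B, d_B) be differential objects compatible with the super structure. Then the map d : Hom(A,B) → Hom(A,B) given by d(f) = f∘d_A − d_B∘ε(f) satisfies d∘d = 0. Moreover, if (A,d_A) and (B,d_B) are admissible, then, with Z(A,B) = ker(d) and 𝔹(A,B) = Im(d), every f ∈ Z(A,B) induces a morphism H(A) → H(B) on cohomology, and this induced morphism is zero whenever f ∈ 𝔹(A,B), so there is a natural group homomorphism Z(A,B)/𝔹(A,B) → Hom(H(A), H(B)). -/

import Mathlib

open CategoryTheory CategoryTheory.Limits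

universe v u

section Defs

variable {C : Type u} [Category.{v} C] [HasZeroMorphisms C]

/-- `i : K ⟶ A` is a kernel of `p : A ⟶ B`. -/
def IsKernelOf {K A B : C} (i : K ⟶ A) (p : A ⟶ B) : Prop :=
  i ≫ p = 0 ∧ ∀ ⦃W : C⦄ (g : W ⟶ A), g ≫ p = 0 → ∃! h : W ⟶ K, h ≫ i = g

/-- `q : B ⟶ Q` is a cokernel of `i : A ⟶ B`. -/
def IsCokernelOf {A B Q : C} (q : B ⟶ Q) (i : A ⟶ B) : Prop :=
  i ≫ q = 0 ∧ ∀ ⦃W : C⦄ (g : B ⟶ W), i ≫ g = 0 → ∃! h : Q ⟶ W, q ≫ h = g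

variable (D : MorphismProperty C)

/-- `A ⟶ B ⟶ Q` is a short exact sequence for the class of deflations `D`:
`p` is a deflation and `i` is a kernel of `p`. -/
def IsShortExact {A B Q : C} (i : A ⟶ B) (p : B ⟶ Q) : Prop :=
  D p ∧ IsKernelOf i p

/-- An inflation is a kernel of some deflation. -/
def IsInflation {A B : C} (i : A ⟶ B) : Prop :=
  ∃ (Q : C) (p : B ⟶ Q), D p ∧ IsKernelOf i p

/-- The axioms for a weakly exact category: `D` is the class of deflations.
Axiom (0): isomorphisms and morphisms to a zero object are deflations;
Axiom (1): a deflation has a kernel and is a cokernel of its kernel;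
Axiom (2): deflations are closed under composition;
Axiom (3): if `g ∘ f` and `f` are deflations then so is `g`;
Axiom (4): the 3×3 lemma. -/
structure IsWeaklyExact : Prop where
  defl_of_isIso : ∀ ⦃X Y : C⦄ (f : X ⟶ Y), IsIso f → D f
  defl_to_zero : ∀ ⦃X Y : C⦄ (f : X ⟶ Y), IsZero Y → D f
  defl_kernel : ∀ ⦃X Y : C⦄ (p : X ⟶ Y), D p →
    ∃ (K : C) (i : K ⟶ X), IsKernelOf i p ∧ IsCokernelOf p i
  defl_comp : ∀ ⦃X Y Z : C⦄ (f : X ⟶ Y) (g : Y ⟶ Z), D f → D g → D (f ≫ g)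
  defl_cancel : ∀ ⦃X Y Z : C⦄ (f : X ⟶ Y) (g : Y ⟶ Z), D (f ≫ g) → D f → D g
  three_by_three : ∀ ⦃A₁ A₂ A₃ B₁ B₂ B₃ C₁ C₂ C₃ : C⦄
    (a₁ : A₁ ⟶ A₂) (a₂ : A₂ ⟶ A₃) (b₁ : B₁ ⟶ B₂) (b₂ : B₂ ⟶ B₃)
    (c₁ : C₁ ⟶ C₂) (c₂ : C₂ ⟶ C₃)
    (f₁ : A₁ ⟶ B₁) (f₂ : A₂ ⟶ B₂) (f₃ : A₃ ⟶ B₃)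
    (g₁ : B₁ ⟶ C₁) (g₂ : B₂ ⟶ C₂) (g₃ : B₃ ⟶ C₃),
    a₁ ≫ f₂ = f₁ ≫ b₁ → a₂ ≫ f₃ = f₂ ≫ b₂ →
    b₁ ≫ g₂ = g₁ ≫ c₁ → b₂ ≫ g₃ = g₂ ≫ c₂ →
    IsShortExact D f₁ g₁ → IsShortExact D f₂ g₂ → IsShortExact D f₃ g₃ →
    IsShortExact D b₁ b₂ → IsShortExact D c₁ c₂ →
    IsShortExact D a₁ a₂

end Defs

section Additive

variable {C : Type u} [Category.{v} C] [Preadditive C]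

/-- A super structure on a weakly exact category: a functor `ε` that is the
identity on objects, is an involution, is additive, and preserves short exact
sequences. -/
structure SuperStructure (D : MorphismProperty C) where
  map : ∀ ⦃X Y : C⦄, (X ⟶ Y) → (X ⟶ Y)
  map_id : ∀ X : C, map (𝟙 X) = 𝟙 X
  map_comp : ∀ ⦃X Y Z : C⦄ (f : X ⟶ Y) (g : Y ⟶ Z), map (f ≫ g) = map f ≫ map g
  map_invol : ∀ ⦃X Y : C⦄ (f : X ⟶ Y), map (map f) = f
  map_add : ∀ ⦃X Y : C⦄ (f g : X ⟶ Y), map (f + g) = map f + map g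
  map_shortExact : ∀ ⦃A B Q : C⦄ (i : A ⟶ B) (p : B ⟶ Q),
    IsShortExact D i p → IsShortExact D (map i) (map p)

variable {D : MorphismProperty C}

/-- The differential `f ↦ f ∘ d_A − d_B ∘ ε(f)` on `Hom(A, B)`, for
differential objects `(A, d_A)` and `(B, d_B)` compatible with the super
structure `ε`. -/
def homDiff (ε : SuperStructure D) {A B : C} (dA : A ⟶ A) (dB : B ⟶ B) :
    (A ⟶ B) →+ (A ⟶ B) :=
  AddMonoidHom.mk' (fun f => dA ≫ f - ε.map f ≫ dB) (by
    intro f g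
    simp only [ε.map_add, Preadditive.comp_add, Preadditive.add_comp]
    abel)

/-- The cocycles `Z(A,B) = ker d ⊆ Hom(A,B)`. -/
def cocycles (ε : SuperStructure D) {A B : C} (dA : A ⟶ A) (dB : B ⟶ B) :
    AddSubgroup (A ⟶ B) where
  carrier := {f | homDiff ε dA dB f = 0}
  add_mem' := by
    intro a b ha hb
    simp only [Set.mem_setOf_eq, map_add] at *
    rw [ha, hb, add_zero]
  zero_mem' := by simp only [Set.mem_setOf_eq, map_zero]
  neg_mem' := by
    intro a ha
    simp only [Set.mem_setOf_eq, map_neg] at *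
    rw [ha, neg_zero]

/-- The coboundaries `𝔹(A,B) = Im d ⊆ Hom(A,B)`. -/
def coboundaries (ε : SuperStructure D) {A B : C} (dA : A ⟶ A) (dB : B ⟶ B) :
    AddSubgroup (A ⟶ B) :=
  (homDiff ε dA dB).range

/-- The homotopy classes `Z(A,B)/𝔹(A,B)`. -/
abbrev homotopyClasses (ε : SuperStructure D) {A B : C} (dA : A ⟶ A) (dB : B ⟶ B) :=
  cocycles ε dA dB ⧸ ((coboundaries ε dA dB).addSubgroupOf (cocycles ε dA dB))

end Additive


section Aux

variable {C : Type u} [Category.{v} C] [HasZeroMorphisms C]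

lemma IsCokernelOf.cancel {A B Q : C} {q : B ⟶ Q} {i : A ⟶ B}
    (h : IsCokernelOf q i) {W : C} {u v : Q ⟶ W}
    (huv : q ≫ u = q ≫ v) : u = v := by
  obtain ⟨hi, huniq⟩ := h
  have h0 : i ≫ (q ≫ u) = 0 := by rw [← Category.assoc, hi, zero_comp]
  obtain ⟨w, hw, hun⟩ := huniq (q ≫ u) h0
  exact (hun u rfl).trans (hun v huv.symm).symm

lemma IsKernelOf.cancel {K A B : C} {i : K ⟶ A} {p : A ⟶ B}
    (h : IsKernelOf i p) {W : C} {u v : W ⟶ K}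
    (huv : u ≫ i = v ≫ i) : u = v := by
  obtain ⟨hi, huniq⟩ := h
  have h0 : (u ≫ i) ≫ p = 0 := by rw [Category.assoc, hi, comp_zero]
  obtain ⟨w, hw, hun⟩ := huniq (u ≫ i) h0
  exact (hun u rfl).trans (hun v huv.symm).symm

end Aux

/-- **Lemma 7.3.**  Let `𝒜` be an additive weakly exact category with an
additive super structure `ε`, and `(A, d_A)`, `(B, d_B)` differential objects
compatible with the super structure.  Then `d(f) = f ∘ d_A − d_B ∘ ε(f)` is a
differential on `Hom(A,B)` (`d² = 0`).  If moreover `(A, d_A)` and `(B, d_B)`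
are admissible (with the canonical data computing `H(A)` and `H(B)`), then
every `f ∈ Z(A,B)` induces a morphism `H(A) ⟶ H(B)` (via the induced morphism
`f̄` on the cokernels), the induced morphism is zero when `f ∈ 𝔹(A,B)`, and
there is a group homomorphism `Z(A,B)/𝔹(A,B) →+ Hom(H(A), H(B))` sending the
class of `f` to the induced morphism. -/
theorem homotopy_invariance_of_cohomology {C : Type u} [Category.{v} C]
    [Preadditive C] [HasZeroObject C] [HasFiniteBiproducts C]
    (D : MorphismProperty C) (hD : IsWeaklyExact D) (ε : SuperStructure D)
    {A B : C} (dA : A ⟶ A) (dB : B ⟶ B)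
    (hdA : dA ≫ dA = 0) (hdB : dB ≫ dB = 0)
    (hεA : ε.map dA = -dA) (hεB : ε.map dB = -dB)
    {IA : C} (eA : A ⟶ IA) (mA : IA ⟶ A) (facA : eA ≫ mA = dA)
    (heA : D eA) (hmA : IsInflation D mA)
    {CoA : C} (cA : A ⟶ CoA) (hcA : IsCokernelOf cA mA)
    (tA : CoA ⟶ IA) (htA : cA ≫ tA = eA)
    {HA : C} (kA : HA ⟶ CoA) (hkA : IsKernelOf kA tA)
    {IB : C} (eB : B ⟶ IB) (mB : IB ⟶ B) (facB : eB ≫ mB = dB)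
    (heB : D eB) (hmB : IsInflation D mB)
    {CoB : C} (cB : B ⟶ CoB) (hcB : IsCokernelOf cB mB)
    (tB : CoB ⟶ IB) (htB : cB ≫ tB = eB)
    {HB : C} (kB : HB ⟶ CoB) (hkB : IsKernelOf kB tB) :
    (∀ f : A ⟶ B, homDiff ε dA dB (homDiff ε dA dB f) = 0) ∧
    (∀ f : A ⟶ B, f ∈ cocycles ε dA dB →
      ∃ (fbar : CoA ⟶ CoB) (Hf : HA ⟶ HB),
        cA ≫ fbar = f ≫ cB ∧ Hf ≫ kB = kA ≫ fbar) ∧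
    (∀ f : A ⟶ B, f ∈ coboundaries ε dA dB →
      ∀ (fbar : CoA ⟶ CoB) (Hf : HA ⟶ HB),
        cA ≫ fbar = f ≫ cB → Hf ≫ kB = kA ≫ fbar → Hf = 0) ∧
    (∃ Φ : homotopyClasses ε dA dB →+ (HA ⟶ HB),
      ∀ (f : A ⟶ B) (hf : f ∈ cocycles ε dA dB)
        (fbar : CoA ⟶ CoB) (Hf : HA ⟶ HB),
        cA ≫ fbar = f ≫ cB → Hf ≫ kB = kA ≫ fbar →
        Φ (QuotientAddGroup.mk ⟨f, hf⟩) = Hf) := by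
  classical
  -- basic cancellation facts
  have epi_cA : ∀ {W : C} {u v : CoA ⟶ W}, cA ≫ u = cA ≫ v → u = v :=
    fun h => hcA.cancel h
  have mono_mB : ∀ {W : C} {u v : W ⟶ IB}, u ≫ mB = v ≫ mB → u = v := by
    obtain ⟨Q, p, _, hker⟩ := hmB
    exact fun h => hker.cancel h
  have mono_kB : ∀ {W : C} {u v : W ⟶ HB}, u ≫ kB = v ≫ kB → u = v :=
    fun h => hkB.cancel h
  have epi_eA : ∀ {W : C} {u v : IA ⟶ W}, eA ≫ u = eA ≫ v → u = v := by
    obtain ⟨K, i, _, hcok⟩ := hD.defl_kernel eA heA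
    exact fun h => hcok.cancel h
  have hdf : ∀ (f : A ⟶ B), homDiff ε dA dB f = dA ≫ f - ε.map f ≫ dB := fun f => rfl
  have εsub : ∀ {X Y : C} (f g : X ⟶ Y), ε.map (f - g) = ε.map f - ε.map g := by
    intro X Y f g
    exact map_sub (AddMonoidHom.mk' (fun h => ε.map h) (fun a b => ε.map_add a b)) f g
  -- d² = 0
  have part1 : ∀ f : A ⟶ B, homDiff ε dA dB (homDiff ε dA dB f) = 0 := by
    intro f
    rw [hdf, hdf, εsub, ε.map_comp, ε.map_comp, ε.map_invol, hεA, hεB]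
    have h1 : dA ≫ dA ≫ f = 0 := by rw [← Category.assoc, hdA, zero_comp]
    have h2 : ε.map f ≫ dB ≫ dB = 0 := by rw [hdB, comp_zero]
    have h3 : f ≫ dB ≫ dB = 0 := by rw [hdB, comp_zero]
    simp only [Preadditive.comp_sub, Preadditive.sub_comp, Preadditive.neg_comp,
      Preadditive.comp_neg, Category.assoc, h1, h2, h3]
    abel
  -- cocycle equations
  have coc1 : ∀ (f : A ⟶ B), f ∈ cocycles ε dA dB → dA ≫ f = ε.map f ≫ dB := by
    intro f hf
    have : dA ≫ f - ε.map f ≫ dB = 0 := (hdf f) ▸ hf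
    exact sub_eq_zero.mp this
  have coc2 : ∀ (f : A ⟶ B), f ∈ cocycles ε dA dB → dA ≫ ε.map f = f ≫ dB := by
    intro f hf
    have h := congrArg (fun x : A ⟶ B => ε.map x) (coc1 f hf)
    try simp only [] at h
    rw [ε.map_comp, ε.map_comp, ε.map_invol, hεA, hεB] at h
    simp only [Preadditive.neg_comp, Preadditive.comp_neg, neg_inj] at h
    exact h
  -- existence of fbar and Hf for cocycles
  have mk_fbar : ∀ (f : A ⟶ B), f ∈ cocycles ε dA dB →
      ∃ fbar : CoA ⟶ CoB, cA ≫ fbar = f ≫ cB := by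
    intro f hf
    have h0 : mA ≫ (f ≫ cB) = 0 := by
      apply epi_eA
      rw [comp_zero, ← Category.assoc, facA, ← Category.assoc, coc1 f hf,
        Category.assoc, ← facB]
      rw [Category.assoc, hcB.1, comp_zero, comp_zero]
    obtain ⟨fbar, hfbar, -⟩ := hcA.2 (f ≫ cB) h0
    exact ⟨fbar, hfbar⟩
  have mk_Hf : ∀ (f : A ⟶ B), f ∈ cocycles ε dA dB →
      ∀ (fbar : CoA ⟶ CoB), cA ≫ fbar = f ≫ cB →
      ∃ Hf : HA ⟶ HB, Hf ≫ kB = kA ≫ fbar := by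
    intro f hf fbar hfbar
    have key : fbar ≫ tB ≫ mB = tA ≫ mA ≫ ε.map f := by
      apply epi_cA
      rw [← Category.assoc cA fbar, hfbar, Category.assoc, ← Category.assoc cB,
        htB, facB, ← coc2 f hf, ← facA, ← htA]
      simp only [Category.assoc]
    have h0 : (kA ≫ fbar) ≫ tB = 0 := by
      apply mono_mB
      rw [zero_comp, Category.assoc, Category.assoc, key, ← Category.assoc,
        ← Category.assoc, hkA.1, zero_comp, zero_comp]
    obtain ⟨Hf, hHf, -⟩ := hkB.2 (kA ≫ fbar) h0
    exact ⟨Hf, hHf⟩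
  have part2 : ∀ f : A ⟶ B, f ∈ cocycles ε dA dB →
      ∃ (fbar : CoA ⟶ CoB) (Hf : HA ⟶ HB),
        cA ≫ fbar = f ≫ cB ∧ Hf ≫ kB = kA ≫ fbar := by
    intro f hf
    obtain ⟨fbar, hfbar⟩ := mk_fbar f hf
    obtain ⟨Hf, hHf⟩ := mk_Hf f hf fbar hfbar
    exact ⟨fbar, Hf, hfbar, hHf⟩
  -- coboundaries induce zero
  have part3 : ∀ f : A ⟶ B, f ∈ coboundaries ε dA dB →
      ∀ (fbar : CoA ⟶ CoB) (Hf : HA ⟶ HB),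
        cA ≫ fbar = f ≫ cB → Hf ≫ kB = kA ≫ fbar → Hf = 0 := by
    intro f hf fbar Hf hfbar hHf
    obtain ⟨g, hg⟩ := hf
    rw [hdf] at hg
    have hfbar' : fbar = tA ≫ mA ≫ g ≫ cB := by
      apply epi_cA
      rw [hfbar, ← hg]
      have hz : dB ≫ cB = 0 := by rw [← facB, Category.assoc, hcB.1, comp_zero]
      simp only [Preadditive.sub_comp, Category.assoc, hz, comp_zero, sub_zero]
      rw [← facA, ← htA]
      simp only [Category.assoc]
    apply mono_kB
    rw [hHf, hfbar', zero_comp, ← Category.assoc, hkA.1, zero_comp]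
  -- uniqueness of Hf as a function of f
  have uniq_Hf : ∀ (f : A ⟶ B) (fbar fbar' : CoA ⟶ CoB) (Hf Hf' : HA ⟶ HB),
      cA ≫ fbar = f ≫ cB → Hf ≫ kB = kA ≫ fbar →
      cA ≫ fbar' = f ≫ cB → Hf' ≫ kB = kA ≫ fbar' → Hf = Hf' := by
    intro f fbar fbar' Hf Hf' h1 h2 h3 h4
    have : fbar = fbar' := epi_cA (h1.trans h3.symm)
    exact mono_kB (by rw [h2, h4, this])
  -- the homomorphism on cocycles
  let φ0 : cocycles ε dA dB → (HA ⟶ HB) := fun x =>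
    (mk_Hf x.1 x.2 (mk_fbar x.1 x.2).choose (mk_fbar x.1 x.2).choose_spec).choose
  have φ0_spec : ∀ x : cocycles ε dA dB, ∃ fbar : CoA ⟶ CoB,
      cA ≫ fbar = (x : A ⟶ B) ≫ cB ∧ φ0 x ≫ kB = kA ≫ fbar := by
    intro x
    exact ⟨(mk_fbar x.1 x.2).choose, (mk_fbar x.1 x.2).choose_spec,
      (mk_Hf x.1 x.2 _ (mk_fbar x.1 x.2).choose_spec).choose_spec⟩
  have φ0_eq : ∀ (x : cocycles ε dA dB) (fbar : CoA ⟶ CoB) (Hf : HA ⟶ HB),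
      cA ≫ fbar = (x : A ⟶ B) ≫ cB → Hf ≫ kB = kA ≫ fbar → φ0 x = Hf := by
    intro x fbar Hf h1 h2
    obtain ⟨fbar', h3, h4⟩ := φ0_spec x
    exact uniq_Hf x fbar' fbar (φ0 x) Hf h3 h4 h1 h2
  have φ0_add : ∀ x y : cocycles ε dA dB, φ0 (x + y) = φ0 x + φ0 y := by
    intro x y
    obtain ⟨fbar, h1, h2⟩ := φ0_spec x
    obtain ⟨gbar, h3, h4⟩ := φ0_spec y
    apply φ0_eq (x + y) (fbar + gbar) (φ0 x + φ0 y)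
    · simp only [AddSubgroup.coe_add, Preadditive.comp_add, Preadditive.add_comp,
        h1, h3]
    · simp only [Preadditive.add_comp, Preadditive.comp_add, h2, h4]
  let φ : cocycles ε dA dB →+ (HA ⟶ HB) := AddMonoidHom.mk' φ0 φ0_add
  have φ_vanish : ∀ x ∈ (coboundaries ε dA dB).addSubgroupOf (cocycles ε dA dB),
      φ x = 0 := by
    intro x hx
    obtain ⟨fbar, h1, h2⟩ := φ0_spec x
    exact part3 x (AddSubgroup.mem_addSubgroupOf.mp hx) fbar (φ0 x) h1 h2
  refine ⟨part1, part2, part3, QuotientAddGroup.lift _ φ φ_vanish, ?_⟩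
  intro f hf fbar Hf h1 h2
  show φ ⟨f, hf⟩ = Hf
  exact φ0_eq ⟨f, hf⟩ fbar Hf h1 h2
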